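/- Let (M_b, ∼_€) and (M_b, ∼_$) be arbitrage-free markets of deterministic cash flows with NA price functionals π_€ and π_$ respectively, and let EURUSD₀ > 0 be given. Then there exists exactly one arbitrage-free combined market (M_b ⊕ M_b, ∼) such that (γ1, o) ∼ (γ2, o) if and only if γ1 ∼_€ γ2, (o, γ1) ∼ (o, γ2) if and only if γ1 ∼_$ γ2, and (δ0, o) ∼ EURUSD₀·(o, δ0). In this combined market, with USDEUR₀ = 1/EURUSD₀, the uniquely determined 1-price of (γ_€, γ_$) ∈ M_b ⊕ M_b is π_€(γ_€) + USDEUR₀·π_$(γ_$), and the uniquely determined 2-price is EURUSD₀·π_€(γ_€) + π_$(γ_$). -/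

import Mathlib

open MeasureTheory
open scoped NNReal

/-- The unit zero-coupon bond with maturity `t`: the Dirac measure at `t`,
as a finite signed Borel measure on `[0,∞)` (modeled as `ℝ≥0`). -/
noncomputable def uzcb (t : ℝ≥0) : SignedMeasure ℝ≥0 :=
  (MeasureTheory.Measure.dirac t).toSignedMeasure

/-- A combined market: a reflexive, symmetric, additive relation on the direct sum
M_b ⊕ M_b such that every nonzero pair of nonnegative cash flows has at least one
strictly positive 1-price. -/
def IsCombinedMarket
    (R : SignedMeasure ℝ≥0 × SignedMeasure ℝ≥0 →
         SignedMeasure ℝ≥0 × SignedMeasure ℝ≥0 → Prop) : Prop :=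
  (∀ p, R p p) ∧
  (∀ p q, R p q → R q p) ∧
  (∀ p₁ p₂ q₁ q₂, R p₁ p₂ → R q₁ q₂ → R (p₁ + q₁) (p₂ + q₂)) ∧
  (∀ p : SignedMeasure ℝ≥0 × SignedMeasure ℝ≥0, 0 ≤ p.1 → 0 ≤ p.2 → p ≠ 0 →
    ∃ b : ℝ, 0 < b ∧ R p (b • ((uzcb 0, 0) : SignedMeasure ℝ≥0 × SignedMeasure ℝ≥0)))

/-- No-arbitrage for a combined market. -/
def NoArbC
    (R : SignedMeasure ℝ≥0 × SignedMeasure ℝ≥0 →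
         SignedMeasure ℝ≥0 × SignedMeasure ℝ≥0 → Prop) : Prop :=
  ¬ ∃ p : SignedMeasure ℝ≥0 × SignedMeasure ℝ≥0, 0 ≤ p.1 ∧ 0 ≤ p.2 ∧ p ≠ 0 ∧ R 0 p

/-- A market of deterministic cash flows in a single currency. -/
def IsMarket (r : SignedMeasure ℝ≥0 → SignedMeasure ℝ≥0 → Prop) : Prop :=
  (∀ γ, r γ γ) ∧
  (∀ γ₁ γ₂, r γ₁ γ₂ → r γ₂ γ₁) ∧
  (∀ γ₁ γ₂ γ₃ γ₄, r γ₁ γ₂ → r γ₃ γ₄ → r (γ₁ + γ₃) (γ₂ + γ₄)) ∧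
  (∀ γ : SignedMeasure ℝ≥0, 0 ≤ γ → γ ≠ 0 → ∃ b : ℝ, 0 < b ∧ r γ (b • uzcb 0))

/-- No-arbitrage for a single-currency market. -/
def NoArb (r : SignedMeasure ℝ≥0 → SignedMeasure ℝ≥0 → Prop) : Prop :=
  ¬ ∃ γ : SignedMeasure ℝ≥0, 0 ≤ γ ∧ γ ≠ 0 ∧ r 0 γ

lemma uzcb0_singleton : uzcb 0 {0} = 1 := by
  rw [uzcb, Measure.toSignedMeasure_apply_measurable (measurableSet_singleton 0)]
  simp [Measure.real]

lemma smul_uzcb_nonneg {c : ℝ} (hc : 0 ≤ c) : 0 ≤ c • uzcb 0 := by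
  rw [VectorMeasure.le_iff]
  intro i hi
  rw [VectorMeasure.zero_apply, VectorMeasure.smul_apply, uzcb,
    Measure.toSignedMeasure_apply_measurable hi, smul_eq_mul]
  exact mul_nonneg hc ENNReal.toReal_nonneg

lemma smul_uzcb_ne_zero {c : ℝ} (hc : c ≠ 0) : c • uzcb 0 ≠ 0 := by
  intro h
  apply hc
  have h0 : (c • uzcb 0) {0} = (0 : SignedMeasure ℝ≥0) {0} := by rw [h]
  rw [VectorMeasure.smul_apply, VectorMeasure.zero_apply, uzcb0_singleton, smul_eq_mul,
    mul_one] at h0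
  exact h0

noncomputable def pr (a b : ℝ) : SignedMeasure ℝ≥0 × SignedMeasure ℝ≥0 :=
  (a • uzcb 0, b • uzcb 0)

lemma pr_add (a b c d : ℝ) : pr a b + pr c d = pr (a + c) (b + d) := by
  simp only [pr, Prod.mk_add_mk, Prod.mk.injEq]
  constructor <;> module

lemma pr_sub (a b c d : ℝ) : pr a b - pr c d = pr (a - c) (b - d) := by
  simp only [pr, Prod.mk_sub_mk, Prod.mk.injEq]
  constructor <;> module

lemma pr_neg (a b : ℝ) : -pr a b = pr (-a) (-b) := by
  simp only [pr, Prod.neg_mk, Prod.mk.injEq]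
  constructor <;> module

lemma pr_zero : pr 0 0 = 0 := by
  simp [pr, zero_smul]

lemma smul_DE (b : ℝ) :
    b • ((uzcb 0, 0) : SignedMeasure ℝ≥0 × SignedMeasure ℝ≥0) = pr b 0 := by
  simp [pr, Prod.smul_mk, smul_zero, zero_smul]

lemma smul_DD (b : ℝ) :
    b • (((0 : SignedMeasure ℝ≥0), uzcb 0)) = pr 0 b := by
  simp [pr, Prod.smul_mk, smul_zero, zero_smul]

lemma pr_ne_zero {a b : ℝ} (h : a ≠ 0 ∨ b ≠ 0) : pr a b ≠ 0 := by
  intro hz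
  rcases h with h | h
  · exact smul_uzcb_ne_zero h (congrArg Prod.fst hz)
  · exact smul_uzcb_ne_zero h (congrArg Prod.snd hz)

lemma rat_to_frac (q : ℚ) (hq : 0 < (q : ℝ)) :
    ∃ m n : ℕ, 0 < (n : ℝ) ∧ (q : ℝ) = (m : ℝ) / (n : ℝ) := by
  refine ⟨q.num.toNat, q.den, by exact_mod_cast q.pos, ?_⟩
  rw [Rat.cast_def]
  congr 1
  exact_mod_cast (Int.toNat_of_nonneg (le_of_lt (Rat.num_pos.mpr (by exact_mod_cast hq)))).symm

section SingleMarket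

variable {r : SignedMeasure ℝ≥0 → SignedMeasure ℝ≥0 → Prop} {π : SignedMeasure ℝ≥0 → ℝ}

lemma mkt_c_eq_zero (hM : IsMarket r) (hNA : NoArb r) {c : ℝ} (h : r 0 (c • uzcb 0)) :
    c = 0 := by
  by_contra hc
  rcases lt_or_gt_of_ne hc with hlt | hgt
  · have h1 := hM.2.1 _ _ h
    have h2 := hM.2.2.1 _ _ _ _ h1 (hM.1 ((-c) • uzcb 0))
    have e1 : c • uzcb 0 + (-c) • uzcb 0 = 0 := by module
    have e2 : (0 : SignedMeasure ℝ≥0) + (-c) • uzcb 0 = (-c) • uzcb 0 := zero_add _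
    rw [e1, e2] at h2
    exact hNA ⟨(-c) • uzcb 0, smul_uzcb_nonneg (by linarith), smul_uzcb_ne_zero (by linarith), h2⟩
  · exact hNA ⟨c • uzcb 0, smul_uzcb_nonneg hgt.le, smul_uzcb_ne_zero (ne_of_gt hgt), h⟩

lemma mkt_price_unique (hM : IsMarket r) (hNA : NoArb r) {γ : SignedMeasure ℝ≥0} {b b' : ℝ}
    (h : r γ (b • uzcb 0)) (h' : r γ (b' • uzcb 0)) : b = b' := by
  have h1 := hM.2.2.1 _ _ _ _ (hM.2.1 _ _ h) h'
  have h2 := hM.2.2.1 _ _ _ _ h1 (hM.1 (-(b • uzcb 0) - γ))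
  have e1 : b • uzcb 0 + γ + (-(b • uzcb 0) - γ) = 0 := by abel
  have e2 : γ + b' • uzcb 0 + (-(b • uzcb 0) - γ) = (b' - b) • uzcb 0 := by module
  rw [e1, e2] at h2
  have := mkt_c_eq_zero hM hNA h2
  linarith

lemma mkt_price_eq (hM : IsMarket r) (hNA : NoArb r) (hπ : ∀ γ, r γ (π γ • uzcb 0))
    {γ : SignedMeasure ℝ≥0} {b : ℝ} (h : r γ (b • uzcb 0)) : b = π γ :=
  mkt_price_unique hM hNA h (hπ γ)

lemma mkt_pi_smul (hM : IsMarket r) (hNA : NoArb r) (hπ : ∀ γ, r γ (π γ • uzcb 0))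
    (c : ℝ) : π (c • uzcb 0) = c :=
  (mkt_price_eq hM hNA hπ (hM.1 (c • uzcb 0))).symm

lemma mkt_pi_zero (hM : IsMarket r) (hNA : NoArb r) (hπ : ∀ γ, r γ (π γ • uzcb 0)) :
    π 0 = 0 := by
  have := mkt_pi_smul hM hNA hπ 0
  rwa [zero_smul] at this

lemma mkt_pi_add (hM : IsMarket r) (hNA : NoArb r) (hπ : ∀ γ, r γ (π γ • uzcb 0))
    (γ₁ γ₂ : SignedMeasure ℝ≥0) : π (γ₁ + γ₂) = π γ₁ + π γ₂ := by
  have h := hM.2.2.1 _ _ _ _ (hπ γ₁) (hπ γ₂)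
  have e : π γ₁ • uzcb 0 + π γ₂ • uzcb 0 = (π γ₁ + π γ₂) • uzcb 0 := by module
  rw [e] at h
  exact (mkt_price_eq hM hNA hπ h).symm

lemma mkt_pi_pos (hM : IsMarket r) (hNA : NoArb r) (hπ : ∀ γ, r γ (π γ • uzcb 0))
    {γ : SignedMeasure ℝ≥0} (h0 : 0 ≤ γ) (hne : γ ≠ 0) : 0 < π γ := by
  obtain ⟨b, hb, hrb⟩ := hM.2.2.2 γ h0 hne
  have := mkt_price_eq hM hNA hπ hrb
  linarith

lemma mkt_pi_nonneg (hM : IsMarket r) (hNA : NoArb r) (hπ : ∀ γ, r γ (π γ • uzcb 0))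
    {γ : SignedMeasure ℝ≥0} (h0 : 0 ≤ γ) : 0 ≤ π γ := by
  rcases eq_or_ne γ 0 with h | h
  · rw [h, mkt_pi_zero hM hNA hπ]
  · exact le_of_lt (mkt_pi_pos hM hNA hπ h0 h)

lemma mkt_rel_iff (hM : IsMarket r) (hNA : NoArb r) (hπ : ∀ γ, r γ (π γ • uzcb 0))
    (γ₁ γ₂ : SignedMeasure ℝ≥0) : r γ₁ γ₂ ↔ π γ₁ = π γ₂ := by
  constructor
  · intro h
    have h1 := hM.2.2.1 _ _ _ _ (hM.2.1 _ _ h) (hM.1 (-γ₁))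
    have h2 := hM.2.2.1 _ _ _ _ h1 (hπ γ₁)
    have e1 : γ₂ + -γ₁ + γ₁ = γ₂ := by abel
    have e2 : γ₁ + -γ₁ + π γ₁ • uzcb 0 = π γ₁ • uzcb 0 := by abel
    rw [e1, e2] at h2
    exact mkt_price_eq hM hNA hπ h2
  · intro h
    have h1 := hM.2.2.1 _ _ _ _ (hπ γ₁) (hM.2.1 _ _ (hπ γ₂))
    have h2 := hM.2.2.1 _ _ _ _ h1 (hM.1 (-(π γ₂ • uzcb 0)))
    have e1 : γ₁ + π γ₂ • uzcb 0 + -(π γ₂ • uzcb 0) = γ₁ := by abel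
    have e2 : π γ₁ • uzcb 0 + γ₂ + -(π γ₂ • uzcb 0) = γ₂ := by rw [h]; abel
    rw [e1, e2] at h2
    exact h2

end SingleMarket

section Combined

variable {R : SignedMeasure ℝ≥0 × SignedMeasure ℝ≥0 →
              SignedMeasure ℝ≥0 × SignedMeasure ℝ≥0 → Prop}

lemma Rtrans (hC : IsCombinedMarket R) {a b c : SignedMeasure ℝ≥0 × SignedMeasure ℝ≥0}
    (h1 : R a b) (h2 : R b c) : R a c := by
  have h3 := hC.2.2.1 _ _ _ _ h1 (hC.1 (-b))
  have h4 := hC.2.2.1 _ _ _ _ h2 h3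
  have e1 : b + (a + -b) = a := by abel
  have e2 : c + (b + -b) = c := by abel
  rwa [e1, e2] at h4

lemma Rcancel (hC : IsCombinedMarket R) {a b : SignedMeasure ℝ≥0 × SignedMeasure ℝ≥0}
    (h : R a b) : R 0 (b - a) := by
  have h2 := hC.2.2.1 _ _ _ _ h (hC.1 (-a))
  have e1 : a + -a = 0 := by abel
  have e2 : b + -a = b - a := by abel
  rwa [e1, e2] at h2

lemma Rneg (hC : IsCombinedMarket R) {a b : SignedMeasure ℝ≥0 × SignedMeasure ℝ≥0}
    (h : R a b) : R (-a) (-b) := by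
  have h2 := hC.2.2.1 _ _ _ _ h (hC.1 (-a + -b))
  have e1 : a + (-a + -b) = -b := by abel
  have e2 : b + (-a + -b) = -a := by abel
  rw [e1, e2] at h2
  exact hC.2.1 _ _ h2

lemma pr_no_arb (hNAC : NoArbC R) {a b : ℝ} (ha : 0 ≤ a) (hb : 0 ≤ b)
    (hab : a ≠ 0 ∨ b ≠ 0) (h : R 0 (pr a b)) : False :=
  hNAC ⟨pr a b, smul_uzcb_nonneg ha, smul_uzcb_nonneg hb, pr_ne_zero hab, h⟩

lemma Rpr_add (hC : IsCombinedMarket R) {a b c d : ℝ}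
    (h1 : R 0 (pr a b)) (h2 : R 0 (pr c d)) : R 0 (pr (a + c) (b + d)) := by
  have h3 := hC.2.2.1 _ _ _ _ h1 h2
  rwa [add_zero, pr_add] at h3

lemma Rpr_nat (hC : IsCombinedMarket R) {a b : ℝ} (h : R 0 (pr a b)) (n : ℕ) :
    R 0 (pr (n * a) (n * b)) := by
  induction n with
  | zero => simpa [pr_zero] using hC.1 0
  | succ n ih =>
    have h3 := Rpr_add hC ih h
    have e1 : ((n + 1 : ℕ) : ℝ) * a = (n : ℝ) * a + a := by push_cast; ring
    have e2 : ((n + 1 : ℕ) : ℝ) * b = (n : ℝ) * b + b := by push_cast; ring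
    rw [e1, e2]
    exact h3

lemma hw_of (hC : IsCombinedMarket R) {E : ℝ}
    (hFX : R (uzcb 0, 0) (E • (((0 : SignedMeasure ℝ≥0), uzcb 0)))) :
    R 0 (pr (-1) E) := by
  have e1 : pr 1 0 = ((uzcb 0, 0) : SignedMeasure ℝ≥0 × SignedMeasure ℝ≥0) := by
    simp [pr, one_smul, zero_smul]
  have hFX' : R (pr 1 0) (pr 0 E) := by
    rw [e1, ← smul_DD]
    exact hFX
  have h := Rcancel hC hFX'
  rw [pr_sub] at h
  norm_num at h
  exact h

lemma zero_pair_pos (hC : IsCombinedMarket R) (hNAC : NoArbC R) {E : ℝ} (hEpos : 0 < E)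
    (hw : R 0 (pr (-1) E)) {a b : ℝ} (h : R 0 (pr a b)) (hpos : 0 < a * E + b) : False := by
  rcases le_or_gt 0 a with ha | ha
  · rcases le_or_gt 0 b with hb | hb
    · refine pr_no_arb hNAC ha hb ?_ h
      by_contra hcon
      push_neg at hcon
      rw [hcon.1, hcon.2] at hpos
      simp at hpos
    · -- b < 0, a > 0
      have hi : -b / E < a := by rw [div_lt_iff₀ hEpos]; nlinarith
      obtain ⟨q, hq1, hq2⟩ := exists_rat_btwn hi
      have hq0 : (0 : ℝ) < q := lt_of_le_of_lt (le_of_lt (div_pos (by linarith) hEpos)) hq1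
      obtain ⟨m, n, hn, hmn⟩ := rat_to_frac q hq0
      rw [hmn] at hq1 hq2
      have h1 : -b / E * n < m := (lt_div_iff₀ hn).mp hq1
      have h2 : (m : ℝ) < a * n := (div_lt_iff₀ hn).mp hq2
      have h1' : -b * n < m * E := by
        rw [div_mul_eq_mul_div, div_lt_iff₀ hEpos] at h1
        linarith
      have key := Rpr_add hC (Rpr_nat hC h n) (Rpr_nat hC hw m)
      refine pr_no_arb hNAC ?_ ?_ (Or.inl (ne_of_gt (by nlinarith))) key
      · nlinarith
      · nlinarith
  · -- a < 0, so b > 0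
    have hw' : R 0 (pr 1 (-E)) := by
      have h2 := Rneg hC hw
      rwa [neg_zero, pr_neg, neg_neg] at h2
    have hi : -a < b / E := by rw [lt_div_iff₀ hEpos]; nlinarith
    obtain ⟨q, hq1, hq2⟩ := exists_rat_btwn hi
    have hq0 : (0 : ℝ) < q := lt_of_le_of_lt (by linarith) hq1
    obtain ⟨m, n, hn, hmn⟩ := rat_to_frac q hq0
    rw [hmn] at hq1 hq2
    have h1 : -a * n < m := (lt_div_iff₀ hn).mp hq1
    have h2 : (m : ℝ) * E < b * n := (div_lt_div_iff₀ hn hEpos).mp hq2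
    have key := Rpr_add hC (Rpr_nat hC h n) (Rpr_nat hC hw' m)
    refine pr_no_arb hNAC ?_ ?_ (Or.inl (ne_of_gt (by nlinarith))) key
    · nlinarith
    · nlinarith

lemma zero_pair (hC : IsCombinedMarket R) (hNAC : NoArbC R) {E : ℝ} (hEpos : 0 < E)
    (hw : R 0 (pr (-1) E)) {a b : ℝ} (h : R 0 (pr a b)) : a * E + b = 0 := by
  rcases lt_trichotomy (a * E + b) 0 with hlt | heq | hgt
  · have h' : R 0 (pr (-a) (-b)) := by
      have h2 := Rneg hC h
      rwa [neg_zero, pr_neg] at h2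
    exact absurd (zero_pair_pos hC hNAC hEpos hw h' (by nlinarith)) (not_false)
  · exact heq
  · exact absurd (zero_pair_pos hC hNAC hEpos hw h hgt) (not_false)

lemma fx_all (hC : IsCombinedMarket R) (hNAC : NoArbC R) {E : ℝ} (hEpos : 0 < E)
    (hw : R 0 (pr (-1) E)) (s : ℝ) : R (pr 0 s) (pr (s / E) 0) := by
  have main : ∀ t : ℝ, 0 < t → R (pr 0 t) (pr (t / E) 0) := by
    intro t ht
    obtain ⟨b, hb, hrb⟩ := hC.2.2.2 (pr 0 t)
      (le_of_eq (zero_smul ℝ (uzcb 0)).symm)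
      (smul_uzcb_nonneg ht.le)
      (pr_ne_zero (Or.inr (ne_of_gt ht)))
    rw [smul_DE] at hrb
    have hcc := Rcancel hC hrb
    rw [pr_sub] at hcc
    have hz := zero_pair hC hNAC hEpos hw hcc
    have hbt : b = t / E := by
      have hE0 : E ≠ 0 := ne_of_gt hEpos
      field_simp
      nlinarith
    rwa [hbt] at hrb
  rcases lt_trichotomy 0 s with hs | hs | hs
  · exact main s hs
  · rw [← hs, zero_div, pr_zero]
    exact hC.1 0
  · have h' := main (-s) (by linarith)
    have h'' := Rneg hC h'
    rw [pr_neg, pr_neg] at h''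
    have e1 : -(0 : ℝ) = 0 := neg_zero
    have e2 : -(-s) = s := neg_neg s
    have e3 : -(-s / E) = s / E := by ring
    rw [e1, e2, e3] at h''
    exact h''

end Combined

section Master

variable {rE rD : SignedMeasure ℝ≥0 → SignedMeasure ℝ≥0 → Prop}
variable {πE πD : SignedMeasure ℝ≥0 → ℝ}
variable {R : SignedMeasure ℝ≥0 × SignedMeasure ℝ≥0 →
              SignedMeasure ℝ≥0 × SignedMeasure ℝ≥0 → Prop}
variable {E : ℝ}

lemma master_rel (hC : IsCombinedMarket R) (hNAC : NoArbC R)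
    (hEe : ∀ γ₁ γ₂ : SignedMeasure ℝ≥0, R (γ₁, 0) (γ₂, 0) ↔ rE γ₁ γ₂)
    (hDe : ∀ γ₁ γ₂ : SignedMeasure ℝ≥0, R (0, γ₁) (0, γ₂) ↔ rD γ₁ γ₂)
    (hFXR : R (uzcb 0, 0) (E • (((0 : SignedMeasure ℝ≥0), uzcb 0))))
    (hEpos : 0 < E)
    (hπE : ∀ γ : SignedMeasure ℝ≥0, rE γ (πE γ • uzcb 0))
    (hπD : ∀ γ : SignedMeasure ℝ≥0, rD γ (πD γ • uzcb 0))
    (γE γD : SignedMeasure ℝ≥0) :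
    R (γE, γD) (pr (πE γE + πD γD / E) 0) := by
  have hw := hw_of hC hFXR
  have h1 : R (γE, (0 : SignedMeasure ℝ≥0)) (πE γE • uzcb 0, 0) :=
    (hEe γE _).mpr (hπE γE)
  have h2 : R ((0 : SignedMeasure ℝ≥0), γD) ((0 : SignedMeasure ℝ≥0), πD γD • uzcb 0) :=
    (hDe γD _).mpr (hπD γD)
  have h12 := hC.2.2.1 _ _ _ _ h1 h2
  have e1 : ((γE, (0 : SignedMeasure ℝ≥0)) + ((0 : SignedMeasure ℝ≥0), γD)) = (γE, γD) := by
    rw [Prod.mk_add_mk, add_zero, zero_add]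
  have e2 : ((πE γE • uzcb 0, (0 : SignedMeasure ℝ≥0)) +
      ((0 : SignedMeasure ℝ≥0), πD γD • uzcb 0)) = (πE γE • uzcb 0, πD γD • uzcb 0) := by
    rw [Prod.mk_add_mk, add_zero, zero_add]
  rw [e1, e2] at h12
  have h3 := fx_all hC hNAC hEpos hw (πD γD)
  have h4 := hC.2.2.1 _ _ _ _ h3 (hC.1 ((πE γE • uzcb 0, (0 : SignedMeasure ℝ≥0))))
  have e3 : pr 0 (πD γD) + (πE γE • uzcb 0, (0 : SignedMeasure ℝ≥0)) =
      (πE γE • uzcb 0, πD γD • uzcb 0) := by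
    simp only [pr, Prod.mk_add_mk, Prod.mk.injEq]
    constructor <;> module
  have e4 : pr (πD γD / E) 0 + (πE γE • uzcb 0, (0 : SignedMeasure ℝ≥0)) =
      pr (πE γE + πD γD / E) 0 := by
    simp only [pr, Prod.mk_add_mk, Prod.mk.injEq]
    constructor <;> module
  rw [e3, e4] at h4
  exact Rtrans hC h12 h4

lemma master_uniq1 (hC : IsCombinedMarket R) (hNAC : NoArbC R)
    (hEe : ∀ γ₁ γ₂ : SignedMeasure ℝ≥0, R (γ₁, 0) (γ₂, 0) ↔ rE γ₁ γ₂)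
    (hDe : ∀ γ₁ γ₂ : SignedMeasure ℝ≥0, R (0, γ₁) (0, γ₂) ↔ rD γ₁ γ₂)
    (hFXR : R (uzcb 0, 0) (E • (((0 : SignedMeasure ℝ≥0), uzcb 0))))
    (hEpos : 0 < E)
    (hπE : ∀ γ : SignedMeasure ℝ≥0, rE γ (πE γ • uzcb 0))
    (hπD : ∀ γ : SignedMeasure ℝ≥0, rD γ (πD γ • uzcb 0))
    (γE γD : SignedMeasure ℝ≥0) {b : ℝ} (hb : R (γE, γD) (pr b 0)) :
    b = πE γE + πD γD / E := by
  have hw := hw_of hC hFXR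
  have hrel := master_rel hC hNAC hEe hDe hFXR hEpos hπE hπD γE γD
  have h := Rtrans hC (hC.2.1 _ _ hrel) hb
  have hcc := Rcancel hC h
  rw [pr_sub] at hcc
  have hz := zero_pair hC hNAC hEpos hw hcc
  have hE0 : E ≠ 0 := ne_of_gt hEpos
  have h0 : (b - (πE γE + πD γD / E)) * E = 0 := by
    have e : (0 : ℝ) - 0 = 0 := by ring
    rw [e] at hz
    linarith
  rcases mul_eq_zero.mp h0 with h' | h'
  · linarith
  · exact absurd h' hE0

lemma master_prices (hC : IsCombinedMarket R) (hNAC : NoArbC R)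
    (hEe : ∀ γ₁ γ₂ : SignedMeasure ℝ≥0, R (γ₁, 0) (γ₂, 0) ↔ rE γ₁ γ₂)
    (hDe : ∀ γ₁ γ₂ : SignedMeasure ℝ≥0, R (0, γ₁) (0, γ₂) ↔ rD γ₁ γ₂)
    (hFXR : R (uzcb 0, 0) (E • (((0 : SignedMeasure ℝ≥0), uzcb 0))))
    (hEpos : 0 < E)
    (hπE : ∀ γ : SignedMeasure ℝ≥0, rE γ (πE γ • uzcb 0))
    (hπD : ∀ γ : SignedMeasure ℝ≥0, rD γ (πD γ • uzcb 0))
    (γE γD : SignedMeasure ℝ≥0) :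
    (∀ b : ℝ, R (γE, γD) (b • ((uzcb 0, 0) :
        SignedMeasure ℝ≥0 × SignedMeasure ℝ≥0)) ↔ b = πE γE + πD γD / E) ∧
    (∀ b : ℝ, R (γE, γD) (b • (((0 : SignedMeasure ℝ≥0), uzcb 0))) ↔
        b = E * πE γE + πD γD) := by
  have hw := hw_of hC hFXR
  have hE0 : E ≠ 0 := ne_of_gt hEpos
  have hrel := master_rel hC hNAC hEe hDe hFXR hEpos hπE hπD γE γD
  constructor
  · intro b
    constructor
    · intro hb
      rw [smul_DE] at hb
      exact master_uniq1 hC hNAC hEe hDe hFXR hEpos hπE hπD γE γD hb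
    · intro hb
      rw [hb, smul_DE]
      exact hrel
  · intro b
    have hfx := fx_all hC hNAC hEpos hw b
    constructor
    · intro hb
      rw [smul_DD] at hb
      have h := Rtrans hC hb hfx
      have := master_uniq1 hC hNAC hEe hDe hFXR hEpos hπE hπD γE γD h
      field_simp at this
      linarith
    · intro hb
      rw [smul_DD]
      refine Rtrans hC ?_ (hC.2.1 _ _ hfx)
      have e : b / E = πE γE + πD γD / E := by
        rw [hb]; field_simp
      rw [e]
      exact hrel

end Master

/-- NA price in combined markets. Given arbitrage-free € and $ markets and a
spot FX rate EURUSD₀ > 0, there is exactly one arbitrage-free combined market extending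
both and exchanging (δ₀, o) for EURUSD₀·(o, δ₀); in it, the unique 1-price of (γ_€, γ_$)
is π_€(γ_€) + USDEUR₀·π_$(γ_$) and the unique 2-price is EURUSD₀·π_€(γ_€) + π_$(γ_$). -/
theorem combined_market_NA_price
    (rE rD : SignedMeasure ℝ≥0 → SignedMeasure ℝ≥0 → Prop)
    (hME : IsMarket rE) (hNAE : NoArb rE)
    (hMD : IsMarket rD) (hNAD : NoArb rD)
    (πE πD : SignedMeasure ℝ≥0 → ℝ)
    (hπE : ∀ γ : SignedMeasure ℝ≥0, rE γ (πE γ • uzcb 0))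
    (hπD : ∀ γ : SignedMeasure ℝ≥0, rD γ (πD γ • uzcb 0))
    (EURUSD₀ : ℝ) (hFX : 0 < EURUSD₀)
    (USDEUR₀ : ℝ) (hUSDEUR₀ : USDEUR₀ = 1 / EURUSD₀) :
    (∃! R : SignedMeasure ℝ≥0 × SignedMeasure ℝ≥0 →
            SignedMeasure ℝ≥0 × SignedMeasure ℝ≥0 → Prop,
      IsCombinedMarket R ∧ NoArbC R ∧
      (∀ γ₁ γ₂ : SignedMeasure ℝ≥0,
        (R (γ₁, 0) (γ₂, 0) ↔ rE γ₁ γ₂)) ∧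
      (∀ γ₁ γ₂ : SignedMeasure ℝ≥0,
        (R (0, γ₁) (0, γ₂) ↔ rD γ₁ γ₂)) ∧
      R (uzcb 0, 0) (EURUSD₀ • (((0 : SignedMeasure ℝ≥0), uzcb 0)))) ∧
    (∀ R : SignedMeasure ℝ≥0 × SignedMeasure ℝ≥0 →
           SignedMeasure ℝ≥0 × SignedMeasure ℝ≥0 → Prop,
      (IsCombinedMarket R ∧ NoArbC R ∧
        (∀ γ₁ γ₂ : SignedMeasure ℝ≥0, (R (γ₁, 0) (γ₂, 0) ↔ rE γ₁ γ₂)) ∧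
        (∀ γ₁ γ₂ : SignedMeasure ℝ≥0, (R (0, γ₁) (0, γ₂) ↔ rD γ₁ γ₂)) ∧
        R (uzcb 0, 0) (EURUSD₀ • (((0 : SignedMeasure ℝ≥0), uzcb 0)))) →
      ∀ γE γD : SignedMeasure ℝ≥0,
        (∀ b : ℝ, R (γE, γD) (b • ((uzcb 0, 0) :
            SignedMeasure ℝ≥0 × SignedMeasure ℝ≥0)) ↔
          b = πE γE + USDEUR₀ * πD γD) ∧
        (∀ b : ℝ, R (γE, γD) (b • (((0 : SignedMeasure ℝ≥0), uzcb 0))) ↔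
          b = EURUSD₀ * πE γE + πD γD)) := by
  subst hUSDEUR₀
  have hE0 : EURUSD₀ ≠ 0 := ne_of_gt hFX
  have piE_smul := mkt_pi_smul hME hNAE hπE
  have piD_smul := mkt_pi_smul hMD hNAD hπD
  have piE_zero := mkt_pi_zero hME hNAE hπE
  have piD_zero := mkt_pi_zero hMD hNAD hπD
  have piE_add := mkt_pi_add hME hNAE hπE
  have piD_add := mkt_pi_add hMD hNAD hπD
  have piE_one : πE (uzcb 0) = 1 := by
    have := piE_smul 1; rwa [one_smul] at this
  -- the candidate combined market
  set V : SignedMeasure ℝ≥0 × SignedMeasure ℝ≥0 → ℝ :=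
    fun p => πE p.1 + πD p.2 / EURUSD₀ with hVdef
  set R₀ : SignedMeasure ℝ≥0 × SignedMeasure ℝ≥0 →
      SignedMeasure ℝ≥0 × SignedMeasure ℝ≥0 → Prop :=
    fun p q => V p = V q with hR₀def
  have Vadd : ∀ p q, V (p + q) = V p + V q := by
    intro p q
    show πE (p.1 + q.1) + πD (p.2 + q.2) / EURUSD₀ = _
    rw [piE_add, piD_add]
    show _ = πE p.1 + πD p.2 / EURUSD₀ + (πE q.1 + πD q.2 / EURUSD₀)
    ring
  have Vpos : ∀ p : SignedMeasure ℝ≥0 × SignedMeasure ℝ≥0,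
      0 ≤ p.1 → 0 ≤ p.2 → p ≠ 0 → 0 < V p := by
    intro p h1 h2 h3
    have hne : p.1 ≠ 0 ∨ p.2 ≠ 0 := by
      by_contra hcon
      push_neg at hcon
      exact h3 (Prod.ext_iff.mpr ⟨hcon.1, hcon.2⟩)
    have hn1 : 0 ≤ πE p.1 := mkt_pi_nonneg hME hNAE hπE h1
    have hn2 : 0 ≤ πD p.2 := mkt_pi_nonneg hMD hNAD hπD h2
    show 0 < πE p.1 + πD p.2 / EURUSD₀
    rcases hne with hne | hne
    · have := mkt_pi_pos hME hNAE hπE h1 hne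
      have : 0 ≤ πD p.2 / EURUSD₀ := div_nonneg hn2 hFX.le
      nlinarith [mkt_pi_pos hME hNAE hπE h1 hne]
    · have := mkt_pi_pos hMD hNAD hπD h2 hne
      have h4 : 0 < πD p.2 / EURUSD₀ := div_pos this hFX
      linarith
  have VsmulDE : ∀ b : ℝ,
      V (b • ((uzcb 0, 0) : SignedMeasure ℝ≥0 × SignedMeasure ℝ≥0)) = b := by
    intro b
    show πE (b • uzcb 0) + πD (b • (0 : SignedMeasure ℝ≥0)) / EURUSD₀ = b
    rw [smul_zero, piD_zero, piE_smul, zero_div, add_zero]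
  have hCM : IsCombinedMarket R₀ := by
    refine ⟨fun p => rfl, fun p q h => h.symm, ?_, ?_⟩
    · intro p₁ p₂ q₁ q₂ h1 h2
      show V (p₁ + q₁) = V (p₂ + q₂)
      rw [Vadd, Vadd]
      have h1' : V p₁ = V p₂ := h1
      have h2' : V q₁ = V q₂ := h2
      rw [h1', h2']
    · intro p h1 h2 h3
      refine ⟨V p, Vpos p h1 h2 h3, ?_⟩
      show V p = V (V p • ((uzcb 0, 0) : SignedMeasure ℝ≥0 × SignedMeasure ℝ≥0))
      rw [VsmulDE]
  have hNAC : NoArbC R₀ := by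
    rintro ⟨p, h1, h2, h3, h4⟩
    have h4' : πE (0 : SignedMeasure ℝ≥0) + πD (0 : SignedMeasure ℝ≥0) / EURUSD₀ = V p := h4
    have := Vpos p h1 h2 h3
    rw [piE_zero, piD_zero] at h4'
    simp at h4'
    linarith
  have hEx1 : ∀ γ₁ γ₂ : SignedMeasure ℝ≥0, R₀ (γ₁, 0) (γ₂, 0) ↔ rE γ₁ γ₂ := by
    intro γ₁ γ₂
    rw [mkt_rel_iff hME hNAE hπE γ₁ γ₂]
    show πE γ₁ + πD 0 / EURUSD₀ = πE γ₂ + πD 0 / EURUSD₀ ↔ _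
    constructor <;> intro h <;> linarith
  have hEx2 : ∀ γ₁ γ₂ : SignedMeasure ℝ≥0, R₀ (0, γ₁) (0, γ₂) ↔ rD γ₁ γ₂ := by
    intro γ₁ γ₂
    rw [mkt_rel_iff hMD hNAD hπD γ₁ γ₂]
    show πE 0 + πD γ₁ / EURUSD₀ = πE 0 + πD γ₂ / EURUSD₀ ↔ _
    constructor <;> intro h
    · have h' : πD γ₁ / EURUSD₀ = πD γ₂ / EURUSD₀ := by linarith
      field_simp at h'
      exact h'
    · rw [h]
  have hFXr : R₀ (uzcb 0, 0) (EURUSD₀ • (((0 : SignedMeasure ℝ≥0), uzcb 0))) := by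
    show πE (uzcb 0) + πD (0 : SignedMeasure ℝ≥0) / EURUSD₀ =
      πE (EURUSD₀ • (0 : SignedMeasure ℝ≥0)) + πD (EURUSD₀ • uzcb 0) / EURUSD₀
    rw [smul_zero, piE_zero, piD_zero, piE_one, piD_smul]
    field_simp
    ring
  refine ⟨⟨R₀, ⟨hCM, hNAC, hEx1, hEx2, hFXr⟩, ?_⟩, ?_⟩
  · -- uniqueness of the combined market
    rintro R ⟨hC, hNACR, hE1, hE2, hFXR⟩
    funext p q
    apply propext
    have hp := master_rel hC hNACR hE1 hE2 hFXR hFX hπE hπD p.1 p.2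
    have hq := master_rel hC hNACR hE1 hE2 hFXR hFX hπE hπD q.1 q.2
    rw [Prod.mk.eta] at hp hq
    constructor
    · intro h
      have h2 : R p (pr (πE q.1 + πD q.2 / EURUSD₀) 0) := Rtrans hC h hq
      have h3 := master_uniq1 hC hNACR hE1 hE2 hFXR hFX hπE hπD p.1 p.2
        (by rw [Prod.mk.eta]; exact h2)
      show V p = V q
      exact h3.symm
    · intro h
      have h' : V p = V q := h
      show R p q
      refine Rtrans hC hp (hC.2.1 _ _ ?_)
      have e : (πE p.1 + πD p.2 / EURUSD₀) = πE q.1 + πD q.2 / EURUSD₀ := h'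
      rw [e] at hp ⊢
      exact hq
  · -- price formulas in any conforming combined market
    rintro R ⟨hC, hNACR, hE1, hE2, hFXR⟩ γE γD
    have hm := master_prices hC hNACR hE1 hE2 hFXR hFX hπE hπD γE γD
    constructor
    · intro b
      rw [hm.1 b]
      have e : πE γE + πD γD / EURUSD₀ = πE γE + 1 / EURUSD₀ * πD γD := by ring
      rw [e]
    · intro b
      exact hm.2 b
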